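/- arXiv:2307.03923 — 6 statements merged into one kernel-verified Lean document; each statement's English description precedes it below -/
import Mathlib

section
/- Let m ≥ 1, let S be an m × m complex Hermitian matrix, and let R be an m × m complex Hermitian invertible matrix satisfying J · R* · J = R, where J is the m × m exchange matrix (J i j = 1 if i + j = m − 1, else 0) and R* denotes the entrywise complex conjugate. Then Tr( (1/2) · (S + J · S* · J) · R⁻¹ ) = Tr(S · R⁻¹). -/
open Matrix


theorem stmt_4 {m : ℕ} (hm : 1 ≤ m) (S R : Matrix (Fin m) (Fin m) ℂ)
    (hS : S.IsHermitian) (hRherm : R.IsHermitian) (hRinv : IsUnit R.det)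
    (J : Matrix (Fin m) (Fin m) ℂ)
    (hJ : ∀ i j : Fin m, J i j = if (i : ℕ) + (j : ℕ) = m - 1 then 1 else 0)
    (hcentro : J * R.map (starRingEnd ℂ) * J = R) :
    (((1 / 2 : ℂ) • (S + J * S.map (starRingEnd ℂ) * J)) * R⁻¹).trace = (S * R⁻¹).trace := by
  -- Hermitian matrices: entrywise conjugate = transpose
  have hmap : ∀ (A : Matrix (Fin m) (Fin m) ℂ), A.IsHermitian →
      A.map (starRingEnd ℂ) = Aᵀ := by
    intro A hA
    ext i j
    have := congrFun (congrFun hA.symm j) i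
    simp only [Matrix.conjTranspose_apply] at this
    simp [Matrix.map_apply, Matrix.transpose_apply, this]
  have hmapS := hmap S hS
  have hmapR := hmap R hRherm
  -- J * J = 1
  have hJJ : J * J = 1 := by
    ext i k
    rw [Matrix.mul_apply]
    simp only [hJ]
    have hi := i.isLt
    have hk := k.isLt
    rw [Finset.sum_eq_single (⟨m - 1 - (i : ℕ), by omega⟩ : Fin m)]
    · simp only [Matrix.one_apply]
      by_cases h : i = k
      · subst h
        rw [if_pos rfl, if_pos (by omega), if_pos (by omega)]
        norm_num
      · rw [if_neg h, if_pos (by omega), if_neg (by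
          intro hc
          apply h
          apply Fin.ext
          omega)]
        norm_num
    · intro b _ hb
      by_cases h : (i : ℕ) + (b : ℕ) = m - 1
      · exfalso
        apply hb
        apply Fin.ext
        show (b : ℕ) = m - 1 - (i : ℕ)
        omega
      · rw [if_neg h, zero_mul]
    · intro h
      exact absurd (Finset.mem_univ _) h
  have hJinv : J⁻¹ = J := Matrix.inv_eq_right_inv hJJ
  -- centro condition with transpose
  have hRT : J * Rᵀ * J = R := by rw [← hmapR]; exact hcentro
  -- R⁻¹ = J * ((R⁻¹)ᵀ * J)
  have hRinv' : R⁻¹ = J * ((R⁻¹)ᵀ * J) := by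
    conv_lhs => rw [← hRT]
    rw [Matrix.mul_inv_rev, Matrix.mul_inv_rev, hJinv, Matrix.transpose_nonsing_inv]
  -- trace of the flipped term
  have hkey : (J * Sᵀ * J * R⁻¹).trace = (S * R⁻¹).trace := by
    conv_lhs => rw [hRinv']
    have : J * Sᵀ * J * (J * ((R⁻¹)ᵀ * J)) = J * (Sᵀ * (R⁻¹)ᵀ * J) := by
      rw [show J * Sᵀ * J * (J * ((R⁻¹)ᵀ * J)) = J * Sᵀ * (J * J) * ((R⁻¹)ᵀ * J) by
        noncomm_ring, hJJ]
      noncomm_ring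
    rw [this, Matrix.trace_mul_comm, Matrix.mul_assoc, Matrix.trace_mul_comm,
      ← Matrix.mul_assoc, hJJ, Matrix.one_mul, ← Matrix.transpose_mul,
      Matrix.trace_transpose, Matrix.trace_mul_comm]
  rw [hmapS, smul_mul_assoc, Matrix.trace_smul, add_mul, Matrix.trace_add, hkey]
  rw [smul_eq_mul]
  ring
end

section
/- Let Y be an m × r complex matrix and let 𝒮 be any set of m × m complex Hermitian positive definite matrices. Then the infimum over R ∈ 𝒮 of Re(Tr(Y · Yᴴ · R⁻¹)) + log(det R) equals the infimum over pairs (X, R), where R ∈ 𝒮, X is an r × r complex Hermitian matrix, and the block matrix fromBlocks X Yᴴ Y R is positive semidefinite, of Re(Tr(X)) + log(det R). (Both infima are taken in the extended reals ℝ ∪ {±∞}, and for Hermitian positive definite R, det R is a positive real number.) -/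
open Matrix
open scoped ComplexOrder

lemma psd_trace_re_nonneg {n : ℕ} {M : Matrix (Fin n) (Fin n) ℂ}
    (hM : M.PosSemidef) : 0 ≤ M.trace.re := by
  rw [Matrix.trace]
  have h : ∀ i, 0 ≤ (M i i).re := by
    intro i
    have := hM.dotProduct_mulVec_nonneg (Pi.single i 1)
    have hdiag : star (Pi.single i 1 : Fin n → ℂ) ⬝ᵥ (M *ᵥ Pi.single i 1) = M i i := by
      simp [mulVec_single, dotProduct, Pi.single_apply, apply_ite, ite_mul]
    rw [hdiag] at this
    exact_mod_cast (Complex.le_def.mp this).1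
  simp only [Matrix.diag]
  rw [Complex.re_sum]
  exact Finset.sum_nonneg fun i _ => h i

theorem stmt_7 {m r : ℕ} (Y : Matrix (Fin m) (Fin r) ℂ)
    (𝒮 : Set (Matrix (Fin m) (Fin m) ℂ)) (h𝒮 : ∀ R ∈ 𝒮, R.PosDef) :
    sInf {v : EReal | ∃ R ∈ 𝒮,
        v = (((Y * Yᴴ * R⁻¹).trace.re + Real.log R.det.re : ℝ) : EReal)} =
    sInf {v : EReal | ∃ (X : Matrix (Fin r) (Fin r) ℂ) (R : Matrix (Fin m) (Fin m) ℂ),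
        R ∈ 𝒮 ∧ X.IsHermitian ∧ (Matrix.fromBlocks X Yᴴ Y R).PosSemidef ∧
        v = ((X.trace.re + Real.log R.det.re : ℝ) : EReal)} := by
  apply le_antisymm
  · apply le_sInf
    rintro v ⟨X, R, hR, hX, hPSD, rfl⟩
    have hRpd := h𝒮 R hR
    haveI := hRpd.isUnit.invertible
    have hschur : (X - Yᴴ * R⁻¹ * (Yᴴ)ᴴ).PosSemidef :=
      (Matrix.PosDef.fromBlocks₂₂ X Yᴴ hRpd).mp (by rwa [conjTranspose_conjTranspose])
    have htr : (Y * Yᴴ * R⁻¹).trace = (Yᴴ * R⁻¹ * (Yᴴ)ᴴ).trace := by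
      rw [conjTranspose_conjTranspose, Matrix.trace_mul_comm (Yᴴ * R⁻¹) Y, ← Matrix.mul_assoc]
    have hle : (Y * Yᴴ * R⁻¹).trace.re ≤ X.trace.re := by
      have := psd_trace_re_nonneg hschur
      rw [Matrix.trace_sub, Complex.sub_re] at this
      rw [htr]; linarith
    refine sInf_le_of_le ⟨R, hR, rfl⟩ ?_
    exact_mod_cast EReal.coe_le_coe_iff.mpr (by linarith)
  · apply le_sInf
    rintro v ⟨R, hR, rfl⟩
    have hRpd := h𝒮 R hR
    haveI := hRpd.isUnit.invertible
    refine sInf_le ⟨Yᴴ * R⁻¹ * Y, R, hR, ?_, ?_, ?_⟩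
    · have hinv : (R⁻¹)ᴴ = R⁻¹ := hRpd.inv.isHermitian
      simp [Matrix.IsHermitian, conjTranspose_mul, hinv, Matrix.mul_assoc]
    · have h0 : (Yᴴ * R⁻¹ * Y - Yᴴ * R⁻¹ * (Yᴴ)ᴴ).PosSemidef := by
        simpa using Matrix.PosSemidef.zero
      have := (Matrix.PosDef.fromBlocks₂₂ (Yᴴ * R⁻¹ * Y) Yᴴ hRpd).mpr h0
      simpa using this
    · congr 2
      rw [Matrix.trace_mul_comm (Yᴴ * R⁻¹) Y, ← Matrix.mul_assoc]
end

section
/- Let Y be an m × r complex matrix and let R_t be an m × m complex Hermitian positive definite Toeplitz matrix; set X_t = Yᴴ · R_t⁻¹ · Y. Let F denote the set of pairs (X, R) where X is an r × r complex Hermitian matrix, R is an m × m complex Hermitian Toeplitz matrix, and fromBlocks X Yᴴ Y R is positive semidefinite. Suppose (X₁, R₁) ∈ F, R₁ is positive definite, and (X₁, R₁) minimizes Re(Tr(X)) + Re(Tr(R_t⁻¹ · R)) over F. Then Re(Tr(X₁)) + log(det R₁) ≤ Re(Tr(X_t)) + log(det R_t). -/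
open Matrix
open scoped ComplexOrder
set_option maxHeartbeats 1000000

-- conjugation preserves PosDef
lemma aux_posdef_conj {n : Type*} [Fintype n] [DecidableEq n]
    {A B : Matrix n n ℂ} (hA : A.PosDef) (hB : IsUnit B.det) :
    (Bᴴ * A * B).PosDef := by
  refine PosDef.of_dotProduct_mulVec_pos (isHermitian_conjTranspose_mul_mul B hA.1) fun x hx => ?_
  have hBx : B *ᵥ x ≠ 0 := by
    intro h
    have hinj : Function.Injective B.mulVec :=
      (Matrix.mulVec_injective_iff_isUnit).mpr ((Matrix.isUnit_iff_isUnit_det B).mpr hB)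
    exact hx (hinj (by simpa using h))
  simpa only [star_mulVec, dotProduct_mulVec, vecMul_vecMul] using hA.dotProduct_mulVec_pos hBx

-- trace of hermitian = sum of eigenvalues
lemma aux_trace_eq {n : ℕ} {M : Matrix (Fin n) (Fin n) ℂ} (hM : M.IsHermitian) :
    M.trace = ∑ i, (hM.eigenvalues i : ℂ) := by
  exact hM.trace_eq_sum_eigenvalues

-- key: log det ≤ trace - n
lemma aux_logdet {n : ℕ} {M : Matrix (Fin n) (Fin n) ℂ} (hM : M.PosDef) :
    Real.log M.det.re ≤ M.trace.re - n := by
  have hH := hM.isHermitian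
  have hev := hM.eigenvalues_pos
  have hdet : M.det.re = ∏ i, hH.eigenvalues i := by
    rw [hH.det_eq_prod_eigenvalues]
    norm_cast
  have htr : M.trace.re = ∑ i, hH.eigenvalues i := by
    rw [aux_trace_eq hH]
    norm_cast
  rw [hdet, htr, Real.log_prod (fun i _ => (hev i).ne')]
  have : ∀ i ∈ Finset.univ, Real.log (hH.eigenvalues i) ≤ hH.eigenvalues i - 1 :=
    fun i _ => Real.log_le_sub_one_of_pos (hev i)
  calc ∑ i, Real.log (hH.eigenvalues i) ≤ ∑ i, (hH.eigenvalues i - 1) :=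
        Finset.sum_le_sum this
    _ = (∑ i, hH.eigenvalues i) - n := by
        rw [Finset.sum_sub_distrib]; simp

theorem stmt_9 {m r : ℕ}
    (Y : Matrix (Fin m) (Fin r) ℂ) (Rt : Matrix (Fin m) (Fin m) ℂ)
    (hRt : Rt.PosDef)
    (hRtToep : ∀ i j i' j' : Fin m, (j : ℤ) - (i : ℤ) = (j' : ℤ) - (i' : ℤ) → Rt i j = Rt i' j')
    (Xt : Matrix (Fin r) (Fin r) ℂ) (hXt : Xt = Yᴴ * Rt⁻¹ * Y)
    (F : Set (Matrix (Fin r) (Fin r) ℂ × Matrix (Fin m) (Fin m) ℂ))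
    (hF : F = {p | p.1.IsHermitian ∧ p.2.IsHermitian ∧
      (∀ i j i' j' : Fin m, (j : ℤ) - (i : ℤ) = (j' : ℤ) - (i' : ℤ) → p.2 i j = p.2 i' j') ∧
      (Matrix.fromBlocks p.1 Yᴴ Y p.2).PosSemidef})
    (X1 : Matrix (Fin r) (Fin r) ℂ) (R1 : Matrix (Fin m) (Fin m) ℂ)
    (hmem : (X1, R1) ∈ F) (hR1 : R1.PosDef)
    (hmin : ∀ p ∈ F,
      X1.trace.re + (Rt⁻¹ * R1).trace.re ≤ p.1.trace.re + (Rt⁻¹ * p.2).trace.re) :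
    X1.trace.re + Real.log R1.det.re ≤ Xt.trace.re + Real.log Rt.det.re := by
  -- Step 1: (Xt, Rt) ∈ F
  have hRtinvH : Rt⁻¹.IsHermitian := hRt.isHermitian.inv
  have hRtdet : IsUnit Rt.det := hRt.det_pos.ne'.isUnit
  haveI : Invertible Rt := Rt.invertibleOfIsUnitDet hRtdet
  have hmemT : (Xt, Rt) ∈ F := by
    rw [hF]
    refine ⟨by rw [hXt]; exact isHermitian_conjTranspose_mul_mul Y hRtinvH,
      hRt.isHermitian, hRtToep, ?_⟩
    rw [show (fromBlocks Xt Yᴴ Y Rt : Matrix _ _ ℂ) = fromBlocks Xt Yᴴ (Yᴴ)ᴴ Rt by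
      rw [conjTranspose_conjTranspose]]
    rw [PosDef.fromBlocks₂₂ _ _ hRt]
    rw [conjTranspose_conjTranspose, hXt, sub_self]
    exact PosSemidef.zero
  -- Step 2: apply minimality
  have h2 := hmin _ hmemT
  have hRtRt : Rt⁻¹ * Rt = 1 := Matrix.nonsing_inv_mul _ hRtdet
  have htr1 : (Rt⁻¹ * Rt).trace.re = (m : ℝ) := by
    rw [hRtRt, Matrix.trace_one]; simp
  -- Step 3: log det inequality via M = S⁻¹ R1 S⁻¹
  obtain ⟨S, hSH, hSS⟩ : ∃ S : Matrix (Fin m) (Fin m) ℂ, S.IsHermitian ∧ S * S = Rt := by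
    open scoped MatrixOrder in
    exact ⟨CFC.sqrt Rt, (CFC.sqrt_nonneg Rt).posSemidef.1, CFC.sqrt_mul_sqrt_self Rt hRt.posSemidef.nonneg⟩
  have hSdet : IsUnit S.det := by
    have : S.det * S.det = Rt.det := by rw [← Matrix.det_mul, hSS]
    exact isUnit_of_mul_isUnit_left (this ▸ hRtdet)
  have hSinvH : S⁻¹.IsHermitian := hSH.inv
  set M := S⁻¹ * R1 * S⁻¹ with hM
  have hMpd : M.PosDef := by
    have h := aux_posdef_conj hR1 (S.isUnit_nonsing_inv_det hSdet)
    rwa [hSinvH.eq, ← hM] at h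
  have hRtinv : Rt⁻¹ = S⁻¹ * S⁻¹ := by rw [← hSS, Matrix.mul_inv_rev]
  have hMtr : M.trace = (Rt⁻¹ * R1).trace := by
    rw [hM, Matrix.trace_mul_cycle, hRtinv, Matrix.mul_assoc]
  -- dets are real
  have hre : ∀ {z : ℂ}, 0 < z → z = (z.re : ℂ) := by
    intro z hz
    have := Complex.lt_def.mp hz
    exact Complex.ext rfl (by simpa using this.2.symm)
  have hR1re : (0:ℝ) < R1.det.re := by
    have := Complex.lt_def.mp hR1.det_pos; simpa using this.1
  have hRtre : (0:ℝ) < Rt.det.re := by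
    have := Complex.lt_def.mp hRt.det_pos; simpa using this.1
  have hMdet : M.det = ((R1.det.re / Rt.det.re : ℝ) : ℂ) := by
    have h3 : Ring.inverse S.det * Ring.inverse S.det = Ring.inverse Rt.det := by
      rw [← Ring.mul_inverse_rev, ← Matrix.det_mul, hSS]
    have hMd0 : M.det = R1.det * Rt.det⁻¹ := by
      rw [hM, Matrix.det_mul, Matrix.det_mul, Matrix.det_nonsing_inv, mul_comm,
        ← mul_assoc, h3, Ring.inverse_eq_inv, mul_comm]
    rw [hMd0]
    conv_lhs => rw [hre hR1.det_pos, hre hRt.det_pos]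
    rw [Complex.ofReal_div, div_eq_mul_inv]
  have hkey := aux_logdet hMpd
  rw [hMdet] at hkey
  simp only [Complex.ofReal_re] at hkey
  rw [Real.log_div hR1re.ne' hRtre.ne'] at hkey
  rw [hMtr] at hkey
  -- combine
  have h2' : X1.trace.re + (Rt⁻¹ * R1).trace.re ≤ Xt.trace.re + m := by
    calc X1.trace.re + (Rt⁻¹ * R1).trace.re ≤ Xt.trace.re + (Rt⁻¹ * Rt).trace.re := h2
      _ = Xt.trace.re + m := by rw [htr1]
  linarith
end

section
/- Let E be a metric space, C ⊆ E a closed set, and h : E × E → ℝ a continuous function; define l : E → ℝ by l(x) = h(x, x). Assume for all x, y ∈ C that h(y, x) ≥ l(y), and let (x_t)_{t ∈ ℕ} be a sequence in C such that for each t, h(x_{t+1}, x_t) ≤ h(y, x_t) for all y ∈ C. If Z ∈ E is the limit of a subsequence (x_{r_t}) with r : ℕ → ℕ strictly monotone, then Z ∈ C and h(Z, Z) ≤ h(y, Z) for every y ∈ C; that is, Z minimizes the surrogate h(·, Z) over C. -/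
theorem stmt_10 {E : Type*} [MetricSpace E] (C : Set E) (hC : IsClosed C)
    (h : E × E → ℝ) (hcont : Continuous h)
    (l : E → ℝ) (hl : ∀ x, l x = h (x, x))
    (hmaj : ∀ x ∈ C, ∀ y ∈ C, h (y, x) ≥ l y)
    (x : ℕ → E) (hxC : ∀ t, x t ∈ C)
    (hstep : ∀ t, ∀ y ∈ C, h (x (t + 1), x t) ≤ h (y, x t))
    (Z : E) (r : ℕ → ℕ) (hr : StrictMono r)
    (hlim : Filter.Tendsto (fun t => x (r t)) Filter.atTop (nhds Z)) :
    Z ∈ C ∧ ∀ y ∈ C, h (Z, Z) ≤ h (y, Z) := by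
  have hlcont : Continuous l := by
    have : Continuous fun z : E => h (z, z) := hcont.comp (continuous_id.prodMk continuous_id)
    simpa [funext hl] using this
  have hZC : Z ∈ C := hC.mem_of_tendsto hlim (Filter.Eventually.of_forall fun t => hxC _)
  refine ⟨hZC, fun y hy => ?_⟩
  -- key chain: l (x (r (t+1))) ≤ h (y, x (r t))
  have hanti : Antitone fun t => l (x t) := by
    refine antitone_nat_of_succ_le fun t => ?_
    calc l (x (t + 1)) ≤ h (x (t + 1), x t) := hmaj _ (hxC t) _ (hxC (t + 1))
      _ ≤ h (x t, x t) := hstep t _ (hxC t)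
      _ = l (x t) := (hl _).symm
  have key : ∀ t, l (x (r (t + 1))) ≤ h (y, x (r t)) := by
    intro t
    calc l (x (r (t + 1))) ≤ l (x (r t + 1)) := hanti (Nat.succ_le_of_lt (hr (Nat.lt_succ_self t)))
      _ ≤ h (x (r t + 1), x (r t)) := hmaj _ (hxC _) _ (hxC _)
      _ ≤ h (y, x (r t)) := hstep _ y hy
  have hlim1 : Filter.Tendsto (fun t => l (x (r (t + 1)))) Filter.atTop (nhds (l Z)) :=
    (hlcont.tendsto Z).comp (hlim.comp (Filter.tendsto_add_atTop_nat 1))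
  have hlim2 : Filter.Tendsto (fun t => h (y, x (r t))) Filter.atTop (nhds (h (y, Z))) :=
    (hcont.tendsto (y, Z)).comp ((Continuous.tendsto (by continuity) Z).comp hlim)
  have := le_of_tendsto_of_tendsto' hlim1 hlim2 key
  simpa [hl] using this
end

section
/- Let A be an n × n complex Hermitian matrix with spectral decomposition A = V · D · Vᴴ, where V is unitary and D is the real diagonal matrix of eigenvalues of A. Define A₊ = V · D₊ · Vᴴ, where D₊ is obtained from D by replacing every negative diagonal entry with 0. Then A₊ is Hermitian positive semidefinite and for every n × n Hermitian positive semidefinite matrix U, ‖A − A₊‖_F ≤ ‖A − U‖_F, where ‖M‖_F = sqrt(Re Tr(Mᴴ M)) is the Frobenius norm. Moreover, the minimizer is unique: if U is positive semidefinite and ‖A − U‖_F = ‖A − A₊‖_F, then U = A₊. -/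
open Matrix
open scoped ComplexOrder

/-- Frobenius norm of a complex matrix. -/
noncomputable def frob {p q : ℕ} (M : Matrix (Fin p) (Fin q) ℂ) : ℝ :=
  Real.sqrt ((Mᴴ * M).trace.re)

private lemma tr_re_eq {n : ℕ} (M : Matrix (Fin n) (Fin n) ℂ) :
    ((Mᴴ * M).trace).re = ∑ j, ∑ i, Complex.normSq (M i j) := by
  simp only [Matrix.trace, Matrix.diag, Matrix.mul_apply, Matrix.conjTranspose_apply]
  rw [Complex.re_sum]
  refine Finset.sum_congr rfl fun j _ => ?_
  rw [Complex.re_sum]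
  refine Finset.sum_congr rfl fun i _ => ?_
  simp [Complex.star_def, ← Complex.normSq_eq_conj_mul_self]

private lemma conj_tr {n : ℕ} (M V : Matrix (Fin n) (Fin n) ℂ)
    (hV : V ∈ Matrix.unitaryGroup (Fin n) ℂ) :
    (((V * M * Vᴴ)ᴴ * (V * M * Vᴴ)).trace) = ((Mᴴ * M).trace) := by
  have h1 : Vᴴ * V = 1 := Matrix.UnitaryGroup.star_mul_self ⟨V, hV⟩
  have h2 : ∀ X : Matrix (Fin n) (Fin n) ℂ, Vᴴ * (V * X) = X := fun X => by
    rw [← Matrix.mul_assoc, h1, Matrix.one_mul]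
  have key : (V * M * Vᴴ)ᴴ * (V * M * Vᴴ) = V * (Mᴴ * (M * Vᴴ)) := by
    simp only [Matrix.conjTranspose_mul, Matrix.conjTranspose_conjTranspose, Matrix.mul_assoc, h2]
  rw [key, Matrix.trace_mul_cycle', Matrix.mul_assoc, h2, Matrix.trace_mul_comm]

private lemma diag_nonneg' {n : ℕ} {B : Matrix (Fin n) (Fin n) ℂ} (hB : B.PosSemidef)
    (i : Fin n) : 0 ≤ B i i := by
  have := hB.dotProduct_mulVec_nonneg (Pi.single i 1)
  simpa [dotProduct, mulVec, Pi.single_apply, Finset.sum_ite_eq, Finset.sum_ite_eq'] using this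

private lemma core {n : ℕ} (d : Fin n → ℝ) (B : Matrix (Fin n) (Fin n) ℂ) (hB : B.PosSemidef) :
    (∑ j, ∑ i, Complex.normSq ((Matrix.diagonal (fun i => ((d i : ℝ) : ℂ)) -
        Matrix.diagonal (fun i => ((max (d i) 0 : ℝ) : ℂ))) i j)) ≤
      (∑ j, ∑ i, Complex.normSq ((Matrix.diagonal (fun i => ((d i : ℝ) : ℂ)) - B) i j)) ∧
    ((∑ j, ∑ i, Complex.normSq ((Matrix.diagonal (fun i => ((d i : ℝ) : ℂ)) - B) i j)) =
      (∑ j, ∑ i, Complex.normSq ((Matrix.diagonal (fun i => ((d i : ℝ) : ℂ)) -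
        Matrix.diagonal (fun i => ((max (d i) 0 : ℝ) : ℂ))) i j)) →
      B = Matrix.diagonal (fun i => ((max (d i) 0 : ℝ) : ℂ))) := by
  set D : Matrix (Fin n) (Fin n) ℂ := Matrix.diagonal (fun i => ((d i : ℝ) : ℂ)) with hD
  set P : Matrix (Fin n) (Fin n) ℂ := Matrix.diagonal (fun i => ((max (d i) 0 : ℝ) : ℂ)) with hP
  -- diagonal entries of B
  have hBre : ∀ i, 0 ≤ (B i i).re ∧ (B i i).im = 0 := by
    intro i
    have := diag_nonneg' hB i
    rw [Complex.le_def] at this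
    exact ⟨by simpa using this.1, by simpa using this.2.symm⟩
  have hFdiag : ∀ i, Complex.normSq ((D - B) i i) = (d i - (B i i).re)^2 := by
    intro i
    have him := (hBre i).2
    simp [hD, Matrix.sub_apply, Matrix.diagonal_apply_eq, Complex.normSq_apply,
      Complex.sub_re, Complex.sub_im, him]
    ring
  have hGdiag : ∀ i, Complex.normSq ((D - P) i i) = (d i - max (d i) 0)^2 := by
    intro i
    simp [hD, hP, Matrix.sub_apply, Matrix.diagonal_apply_eq, ← Complex.ofReal_sub,
      Complex.normSq_apply]
    ring
  have hGoff : ∀ i j, i ≠ j → Complex.normSq ((D - P) i j) = 0 := by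
    intro i j hij
    simp [hD, hP, Matrix.sub_apply, Matrix.diagonal_apply_ne _ hij]
  have hpt : ∀ i j, Complex.normSq ((D - P) i j) ≤ Complex.normSq ((D - B) i j) := by
    intro i j
    by_cases hij : i = j
    · subst hij
      rw [hFdiag, hGdiag]
      rcases le_total (d i) 0 with h | h
      · rw [max_eq_right h]
        nlinarith [(hBre i).1]
      · rw [max_eq_left h]
        nlinarith [sq_nonneg (d i - (B i i).re)]
    · rw [hGoff i j hij]
      exact Complex.normSq_nonneg _
  have hinner : ∀ j ∈ Finset.univ, (∑ i, Complex.normSq ((D - P) i j)) ≤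
      (∑ i, Complex.normSq ((D - B) i j)) := by
    intro j _
    exact Finset.sum_le_sum fun i _ => hpt i j
  constructor
  · exact Finset.sum_le_sum hinner
  · intro heq
    have h1 := (Finset.sum_eq_sum_iff_of_le hinner).mp heq.symm
    have h2 : ∀ i j, Complex.normSq ((D - P) i j) = Complex.normSq ((D - B) i j) := by
      intro i j
      have := (Finset.sum_eq_sum_iff_of_le (fun i _ => hpt i j)).mp
        (h1 j (Finset.mem_univ j))
      exact this i (Finset.mem_univ i)
    ext i j
    by_cases hij : i = j
    · subst hij
      have he := h2 i i
      rw [hFdiag, hGdiag] at he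
      have hr := (hBre i).1
      have hreq : (B i i).re = max (d i) 0 := by
        rcases le_total (d i) 0 with h | h
        · rw [max_eq_right h] at he ⊢
          nlinarith
        · rw [max_eq_left h] at he ⊢
          nlinarith
      have him := (hBre i).2
      rw [hP, Matrix.diagonal_apply_eq]
      apply Complex.ext
      · simpa using hreq
      · simpa using him
    · have he := h2 i j
      rw [hGoff i j hij] at he
      have : (D - B) i j = 0 := by
        have := Complex.normSq_eq_zero.mp he.symm
        exact this
      rw [Matrix.sub_apply, hD, Matrix.diagonal_apply_ne _ hij, sub_eq_zero] at this
      rw [hP, Matrix.diagonal_apply_ne _ hij, ← this]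

theorem stmt_12 {n : ℕ} (A : Matrix (Fin n) (Fin n) ℂ) (hA : A.IsHermitian)
    (V : Matrix (Fin n) (Fin n) ℂ) (hV : V ∈ Matrix.unitaryGroup (Fin n) ℂ)
    (d : Fin n → ℝ)
    (hdecomp : A = V * Matrix.diagonal (fun i => ((d i : ℝ) : ℂ)) * Vᴴ)
    (Aplus : Matrix (Fin n) (Fin n) ℂ)
    (hAplus : Aplus = V * Matrix.diagonal (fun i => ((max (d i) 0 : ℝ) : ℂ)) * Vᴴ) :
    Aplus.PosSemidef ∧
    (∀ U : Matrix (Fin n) (Fin n) ℂ, U.PosSemidef → frob (A - Aplus) ≤ frob (A - U)) ∧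
    (∀ U : Matrix (Fin n) (Fin n) ℂ, U.PosSemidef →
      frob (A - U) = frob (A - Aplus) → U = Aplus) := by
  set D : Matrix (Fin n) (Fin n) ℂ := Matrix.diagonal (fun i => ((d i : ℝ) : ℂ)) with hD
  set P : Matrix (Fin n) (Fin n) ℂ := Matrix.diagonal (fun i => ((max (d i) 0 : ℝ) : ℂ)) with hP
  have h1 : Vᴴ * V = 1 := Matrix.UnitaryGroup.star_mul_self ⟨V, hV⟩
  have h1' : V * Vᴴ = 1 := by
    have := (Unitary.mem_iff.mp hV).2
    simpa [Matrix.star_eq_conjTranspose] using this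
  have hPpsd : P.PosSemidef := by
    refine Matrix.posSemidef_diagonal_iff.mpr fun i => ?_
    rw [Complex.le_def]
    simp [le_max_right]
  have hAplusPsd : Aplus.PosSemidef := by
    rw [hAplus]
    exact hPpsd.mul_mul_conjTranspose_same V
  -- general frob computation for PSD U
  have hfrob : ∀ U : Matrix (Fin n) (Fin n) ℂ,
      U = V * (Vᴴ * U * V) * Vᴴ := by
    intro U
    calc U = (V * Vᴴ) * U * (V * Vᴴ) := by rw [h1']; simp
      _ = V * (Vᴴ * U * V) * Vᴴ := by simp only [Matrix.mul_assoc]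
  have hAminus : ∀ U : Matrix (Fin n) (Fin n) ℂ,
      A - U = V * (D - (Vᴴ * U * V)) * Vᴴ := by
    intro U
    rw [Matrix.mul_sub, Matrix.sub_mul, ← hdecomp, ← hfrob U]
  have hfrobval : ∀ U : Matrix (Fin n) (Fin n) ℂ,
      frob (A - U) = Real.sqrt (∑ j, ∑ i, Complex.normSq ((D - (Vᴴ * U * V)) i j)) := by
    intro U
    unfold frob
    rw [hAminus U, conj_tr _ _ hV, tr_re_eq]
  have hBA : Vᴴ * Aplus * V = P := by
    rw [hAplus]
    calc Vᴴ * (V * P * Vᴴ) * V = (Vᴴ * V) * P * (Vᴴ * V) := by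
          simp only [Matrix.mul_assoc]
      _ = P := by rw [h1]; simp
  have hfrobAplus : frob (A - Aplus) =
      Real.sqrt (∑ j, ∑ i, Complex.normSq ((D - P) i j)) := by
    rw [hfrobval Aplus, hBA]
  refine ⟨hAplusPsd, ?_, ?_⟩
  · intro U hU
    have hBpsd : (Vᴴ * U * V).PosSemidef := hU.conjTranspose_mul_mul_same V
    rw [hfrobAplus, hfrobval U]
    exact Real.sqrt_le_sqrt (core d _ hBpsd).1
  · intro U hU heq
    have hBpsd : (Vᴴ * U * V).PosSemidef := hU.conjTranspose_mul_mul_same V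
    rw [hfrobAplus, hfrobval U] at heq
    have hnn1 : (0:ℝ) ≤ ∑ j, ∑ i, Complex.normSq ((D - (Vᴴ * U * V)) i j) :=
      Finset.sum_nonneg fun j _ => Finset.sum_nonneg fun i _ => Complex.normSq_nonneg _
    have hnn2 : (0:ℝ) ≤ ∑ j, ∑ i, Complex.normSq ((D - P) i j) :=
      Finset.sum_nonneg fun j _ => Finset.sum_nonneg fun i _ => Complex.normSq_nonneg _
    have hsum : (∑ j, ∑ i, Complex.normSq ((D - (Vᴴ * U * V)) i j)) =
        ∑ j, ∑ i, Complex.normSq ((D - P) i j) :=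
      (Real.sqrt_inj hnn1 hnn2).mp heq
    have hBeq : Vᴴ * U * V = P := (core d _ hBpsd).2 hsum
    rw [hfrob U, hBeq, ← hAplus]
end

section
/- Let D and Ψ be n × n complex Hermitian matrices, and let (Ψ + D)₊ denote the positive semidefinite matrix obtained from the spectral decomposition of Ψ + D by replacing negative eigenvalues with 0. Then E₀ = (Ψ + D)₊ − D satisfies E₀ + D ⪰ 0, and for every n × n Hermitian matrix E with E + D positive semidefinite, ‖Ψ − E₀‖_F ≤ ‖Ψ − E‖_F, where ‖M‖_F = sqrt(Re Tr(Mᴴ M)) is the Frobenius norm. -/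
open Matrix
open scoped ComplexOrder

lemma trace_re_eq {n : ℕ} (M : Matrix (Fin n) (Fin n) ℂ) :
    (Mᴴ * M).trace.re = ∑ i, ∑ j, Complex.normSq (M j i) := by
  simp [Matrix.trace, Matrix.diag, Matrix.mul_apply, Matrix.conjTranspose_apply,
    Complex.re_sum, ← Complex.normSq_eq_conj_mul_self]

lemma key_ineq (d r : ℝ) (hr : 0 ≤ r) : (min d 0)^2 ≤ (d - r)^2 := by
  rcases le_total d 0 with h|h
  · rw [min_eq_left h]; nlinarith
  · rw [min_eq_right h]; nlinarith [sq_nonneg (d - r)]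

lemma trace_conj {n : ℕ} (M V : Matrix (Fin n) (Fin n) ℂ)
    (h2 : V * Vᴴ = 1) :
    ((Vᴴ * M * V)ᴴ * (Vᴴ * M * V)).trace = (Mᴴ * M).trace := by
  have e : (Vᴴ * M * V)ᴴ * (Vᴴ * M * V) = Vᴴ * (Mᴴ * M) * V := by
    simp only [Matrix.conjTranspose_mul, Matrix.conjTranspose_conjTranspose]
    rw [show Vᴴ * (Mᴴ * V) * (Vᴴ * M * V) = Vᴴ * Mᴴ * (V * Vᴴ) * (M * V) by
      simp only [Matrix.mul_assoc], h2, Matrix.mul_one]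
    simp only [Matrix.mul_assoc]
  rw [e, Matrix.trace_mul_cycle, ← Matrix.mul_assoc, h2, Matrix.one_mul]

lemma conj_cancel {n : ℕ} (A V : Matrix (Fin n) (Fin n) ℂ)
    (h1 : Vᴴ * V = 1) : Vᴴ * (V * A * Vᴴ) * V = A := by
  have : Vᴴ * (V * A * Vᴴ) * V = Vᴴ * V * A * (Vᴴ * V) := by
    simp only [Matrix.mul_assoc]
  rw [this, h1, Matrix.one_mul, Matrix.mul_one]

theorem stmt_13 {n : ℕ} (D Ψ : Matrix (Fin n) (Fin n) ℂ)
    (hD : D.IsHermitian) (hΨ : Ψ.IsHermitian)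
    (V : Matrix (Fin n) (Fin n) ℂ) (hV : V ∈ Matrix.unitaryGroup (Fin n) ℂ)
    (d : Fin n → ℝ)
    (hdecomp : Ψ + D = V * Matrix.diagonal (fun i => ((d i : ℝ) : ℂ)) * Vᴴ)
    (E₀ : Matrix (Fin n) (Fin n) ℂ)
    (hE₀ : E₀ = V * Matrix.diagonal (fun i => ((max (d i) 0 : ℝ) : ℂ)) * Vᴴ - D) :
    (E₀ + D).PosSemidef ∧
    (∀ E : Matrix (Fin n) (Fin n) ℂ, E.IsHermitian → (E + D).PosSemidef →
      frob (Ψ - E₀) ≤ frob (Ψ - E)) := by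
  have h1 : Vᴴ * V = 1 := by
    have := hV.1
    rwa [Matrix.star_eq_conjTranspose] at this
  have h2 : V * Vᴴ = 1 := by
    have := hV.2
    rwa [Matrix.star_eq_conjTranspose] at this
  have hE₀D : E₀ + D = V * Matrix.diagonal (fun i => ((max (d i) 0 : ℝ) : ℂ)) * Vᴴ := by
    rw [hE₀, sub_add_cancel]
  constructor
  · rw [hE₀D]
    exact (Matrix.posSemidef_diagonal_iff.mpr fun i => by
      rw [Complex.zero_le_real]; exact le_max_right _ _).mul_mul_conjTranspose_same V
  intro E hE hpsd
  -- the projected residual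
  have hres : Ψ - E₀ = V * Matrix.diagonal (fun i => ((min (d i) 0 : ℝ) : ℂ)) * Vᴴ := by
    have h0 : Ψ - E₀ = (Ψ + D) - (E₀ + D) := by abel
    have hfun : (Matrix.diagonal fun i => ((d i : ℝ) : ℂ)) -
        (Matrix.diagonal fun i => ((max (d i) 0 : ℝ) : ℂ)) =
        Matrix.diagonal fun i => ((min (d i) 0 : ℝ) : ℂ) := by
      ext i j
      by_cases h : i = j
      · subst h
        simp only [Matrix.sub_apply, Matrix.diagonal_apply_eq]
        rw [← Complex.ofReal_sub]
        congr 1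
        have := min_add_max (d i) 0
        linarith
      · simp [Matrix.diagonal_apply_ne _ h]
    rw [h0, hdecomp, hE₀D, ← Matrix.sub_mul, ← Matrix.mul_sub, hfun]
  set C := Vᴴ * (E + D) * V with hCdef
  have hC : C.PosSemidef := by
    have := hpsd.mul_mul_conjTranspose_same Vᴴ
    rwa [Matrix.conjTranspose_conjTranspose] at this
  have hCdiag : ∀ i, C i i = ((C i i).re : ℂ) ∧ 0 ≤ (C i i).re := by
    intro i
    have h := hC.dotProduct_mulVec_nonneg (Pi.single i 1)
    simp [dotProduct, Matrix.mulVec, Pi.single_apply, Complex.le_def] at h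
    constructor
    · apply Complex.ext <;> simp [h.2]
    · exact h.1
  -- residual for E
  have hresE : Vᴴ * (Ψ - E) * V = Matrix.diagonal (fun i => ((d i : ℝ) : ℂ)) - C := by
    have h0 : Ψ - E = (Ψ + D) - (E + D) := by abel
    rw [h0, Matrix.mul_sub, Matrix.sub_mul, hdecomp, conj_cancel _ _ h1, hCdef]
  -- trace computations
  have t0 : ((Ψ - E₀)ᴴ * (Ψ - E₀)).trace.re = ∑ i, (min (d i) 0)^2 := by
    have hc : Vᴴ * (Ψ - E₀) * V = Matrix.diagonal (fun i => ((min (d i) 0 : ℝ) : ℂ)) := by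
      rw [hres, conj_cancel _ _ h1]
    rw [← trace_conj (Ψ - E₀) V h2, hc, trace_re_eq]
    simp [Matrix.diagonal_apply, apply_ite Complex.normSq, Complex.normSq_ofReal, sq]
  have t1 : ∑ i, (min (d i) 0)^2 ≤ ((Ψ - E)ᴴ * (Ψ - E)).trace.re := by
    rw [← trace_conj (Ψ - E) V h2, trace_re_eq]
    have step1 : ∀ i, (min (d i) 0)^2 ≤
        ∑ j, Complex.normSq ((Vᴴ * (Ψ - E) * V) j i) := by
      intro i
      have diagle : (min (d i) 0)^2 ≤ Complex.normSq ((Vᴴ * (Ψ - E) * V) i i) := by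
        rw [hresE]
        have : (Matrix.diagonal (fun i => ((d i : ℝ) : ℂ)) - C) i i = (d i : ℂ) - C i i := by
          simp [Matrix.diagonal_apply]
        rw [this, Complex.normSq_apply]
        obtain ⟨him, hre⟩ := hCdiag i
        have h1' : ((d i : ℂ) - C i i).re = d i - (C i i).re := by simp
        have h2' : ((d i : ℂ) - C i i).im = 0 := by
          rw [him]; simp
        rw [h1', h2']
        simpa [sq] using key_ineq (d i) ((C i i).re) hre
      refine diagle.trans ?_
      exact Finset.single_le_sum (f := fun j => Complex.normSq ((Vᴴ * (Ψ - E) * V) j i)) (fun j _ => Complex.normSq_nonneg _) (Finset.mem_univ i)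
    exact Finset.sum_le_sum fun i _ => step1 i
  unfold frob
  exact Real.sqrt_le_sqrt (by rw [t0]; exact t1)
end
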